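/- Let V be a model category. Suppose given: a cofibration i : A → B; a fibration p : X → Y; maps u : A → X and v : B → Y with p ∘ u = v ∘ i; a weak equivalence w : B' → B; and a map f : A → B' with w ∘ f = i. Then there exists a lift l : B → X with l ∘ i = u and p ∘ l = v if and only if there exists a map l' : B' → X with l' ∘ f = u and p ∘ l' = v ∘ w. -/
import Mathlib


open CategoryTheory Limits

/-- A morphism `f` is a retract of a morphism `g` (in the arrow category). -/
def IsRetractOfMor {C : Type*} [Category C] {X Y X' Y' : C}
    (f : X ⟶ Y) (g : X' ⟶ Y') : Prop :=
  ∃ (iX : X ⟶ X') (rX : X' ⟶ X) (iY : Y ⟶ Y') (rY : Y' ⟶ Y),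
    iX ≫ rX = 𝟙 X ∧ iY ≫ rY = 𝟙 Y ∧ iX ≫ g = f ≫ iY ∧ g ≫ rY = rX ≫ f

/-- A model structure in Quillen's sense on a category `C`: three classes of morphisms
(weak equivalences, cofibrations, fibrations) satisfying the two-out-of-three, retract,
lifting, and factorization axioms.  (Completeness and cocompleteness of `C` are imposed
separately via `HasLimits`/`HasColimits` instances.) -/
structure ModelStructure (C : Type*) [Category C] where
  weq : MorphismProperty C
  cof : MorphismProperty C
  fib : MorphismProperty C
  /-- two-out-of-three: composition -/
  weq_comp : ∀ {X Y Z : C} (f : X ⟶ Y) (g : Y ⟶ Z), weq f → weq g → weq (f ≫ g)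
  /-- two-out-of-three: left cancellation -/
  weq_of_precomp : ∀ {X Y Z : C} (f : X ⟶ Y) (g : Y ⟶ Z), weq f → weq (f ≫ g) → weq g
  /-- two-out-of-three: right cancellation -/
  weq_of_postcomp : ∀ {X Y Z : C} (f : X ⟶ Y) (g : Y ⟶ Z), weq g → weq (f ≫ g) → weq f
  /-- weak equivalences are closed under retracts -/
  weq_retract : ∀ {X Y X' Y' : C} (f : X ⟶ Y) (g : X' ⟶ Y'),
    IsRetractOfMor f g → weq g → weq f
  /-- cofibrations are closed under retracts -/
  cof_retract : ∀ {X Y X' Y' : C} (f : X ⟶ Y) (g : X' ⟶ Y'),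
    IsRetractOfMor f g → cof g → cof f
  /-- fibrations are closed under retracts -/
  fib_retract : ∀ {X Y X' Y' : C} (f : X ⟶ Y) (g : X' ⟶ Y'),
    IsRetractOfMor f g → fib g → fib f
  /-- lifting of cofibrations against trivial fibrations -/
  lift_cof_trivFib : ∀ {A B X Y : C} (i : A ⟶ B) (p : X ⟶ Y),
    cof i → fib p → weq p → HasLiftingProperty i p
  /-- lifting of trivial cofibrations against fibrations -/
  lift_trivCof_fib : ∀ {A B X Y : C} (i : A ⟶ B) (p : X ⟶ Y),
    cof i → weq i → fib p → HasLiftingProperty i p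
  /-- factorization as a cofibration followed by a trivial fibration -/
  fact_cof_trivFib : ∀ {X Y : C} (f : X ⟶ Y),
    ∃ (Z : C) (i : X ⟶ Z) (p : Z ⟶ Y), cof i ∧ fib p ∧ weq p ∧ i ≫ p = f
  /-- factorization as a trivial cofibration followed by a fibration -/
  fact_trivCof_fib : ∀ {X Y : C} (f : X ⟶ Y),
    ∃ (Z : C) (i : X ⟶ Z) (p : Z ⟶ Y), cof i ∧ weq i ∧ fib p ∧ i ≫ p = f

/-- lifting-transfer lemma: given a cofibration `i : A ⟶ B`, a fibration
`p : X ⟶ Y`, maps `u : A ⟶ X`, `v : B ⟶ Y` with `p ∘ u = v ∘ i`, a weak equivalence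
`w : B' ⟶ B` and a map `f : A ⟶ B'` with `w ∘ f = i`, a lift `l : B ⟶ X` (with
`l ∘ i = u` and `p ∘ l = v`) exists iff a map `l' : B' ⟶ X` with `l' ∘ f = u` and
`p ∘ l' = v ∘ w` exists. -/
theorem lifting_transfer {C : Type*} [Category C] [HasLimits C] [HasColimits C]
    (M : ModelStructure C) {A B B' X Y : C}
    (i : A ⟶ B) (p : X ⟶ Y) (u : A ⟶ X) (v : B ⟶ Y) (w : B' ⟶ B) (f : A ⟶ B')
    (hi : M.cof i) (hp : M.fib p) (hw : M.weq w)
    (hsq : u ≫ p = i ≫ v) (hf : f ≫ w = i) :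
    (∃ l : B ⟶ X, i ≫ l = u ∧ l ≫ p = v) ↔
    (∃ l' : B' ⟶ X, f ≫ l' = u ∧ l' ≫ p = w ≫ v) := by
  constructor
  · rintro ⟨l, h1, h2⟩
    exact ⟨w ≫ l, by rw [← Category.assoc, hf, h1], by rw [Category.assoc, h2]⟩
  · rintro ⟨l', h1, h2⟩
    obtain ⟨Z, j, q, hjc, hjw, hqf, hfact⟩ := M.fact_trivCof_fib w
    have hqw : M.weq q := M.weq_of_precomp j q hjw (by rw [hfact]; exact hw)
    haveI := M.lift_cof_trivFib i q hi hqf hqw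
    haveI := M.lift_trivCof_fib j p hjc hjw hp
    have sq1 : CommSq (f ≫ j) i q (𝟙 B) :=
      ⟨by rw [Category.assoc, hfact, hf, Category.comp_id]⟩
    have sq2 : CommSq l' j p (q ≫ v) :=
      ⟨by rw [h2, ← Category.assoc, hfact]⟩
    refine ⟨sq1.lift ≫ sq2.lift, ?_, ?_⟩
    · rw [← Category.assoc, sq1.fac_left, Category.assoc, sq2.fac_left, h1]
    · rw [Category.assoc, sq2.fac_right, ← Category.assoc, sq1.fac_right,
        Category.id_comp]
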